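/- (Traditional Fano inequality) For a joint distribution p^{XY} on {1,...,n}² with error probability E = ∑_{x≠y} p^{XY}(x,y), the conditional Shannon entropy satisfies S^{Y|X} ≤ −E ln E − (1−E) ln(1−E) + E ln(n−1). -/
import Mathlib


open Finset

-- Marginal on `X` of a joint distribution `r` on `{1,…,n}²`.
noncomputable def pXof (n : ℕ) (r : ℕ → ℕ → ℝ) (x : ℕ) : ℝ :=
  ∑ y ∈ Finset.Icc 1 n, r x y

-- Conditional Shannon entropy `S^{Y|X} = ∑_x p^X(x) S(p^{Y|x})` of a joint distribution,
-- with `p^{Y|x}(y) = r(x,y)/p^X(x)` (terms with `p^X(x) = 0` contribute zero).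
noncomputable def condEnt (n : ℕ) (r : ℕ → ℕ → ℝ) : ℝ :=
  ∑ x ∈ Finset.Icc 1 n, pXof n r x *
    (-∑ y ∈ Finset.Icc 1 n, (r x y / pXof n r x) * Real.log (r x y / pXof n r x))

-- The error probability `E = ∑_{x ≠ y} r(x,y)`.
noncomputable def errProb (n : ℕ) (r : ℕ → ℕ → ℝ) : ℝ :=
  ∑ x ∈ Finset.Icc 1 n, ∑ y ∈ Finset.Icc 1 n, if x = y then 0 else r x y

/-- (Traditional Fano inequality.) For a joint distribution `q` on `{1,…,n}²` with error
probability `E = ∑_{x≠y} q(x,y)`, the conditional Shannon entropy satisfies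
`S^{Y|X} ≤ −E ln E − (1−E) ln(1−E) + E ln(n−1)`. -/
theorem traditional_fano (n : ℕ) (hn : 1 ≤ n) (q : ℕ → ℕ → ℝ)
    (hq0 : ∀ x ∈ Finset.Icc 1 n, ∀ y ∈ Finset.Icc 1 n, 0 ≤ q x y)
    (hq1 : ∑ x ∈ Finset.Icc 1 n, ∑ y ∈ Finset.Icc 1 n, q x y = 1) :
    condEnt n q ≤
      -(errProb n q * Real.log (errProb n q))
        - (1 - errProb n q) * Real.log (1 - errProb n q)
        + errProb n q * Real.log ((n : ℝ) - 1) := by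
  set E : ℝ := errProb n q with hE
  set m : ℕ → ℕ → ℝ := fun x y => if x = y then 1 - E else E / ((n : ℝ) - 1) with hm
  have hP0 : ∀ x ∈ Finset.Icc 1 n, 0 ≤ pXof n q x := fun x hx =>
    Finset.sum_nonneg fun y hy => hq0 x hx y hy
  have hqleP : ∀ x ∈ Finset.Icc 1 n, ∀ y ∈ Finset.Icc 1 n, q x y ≤ pXof n q x := fun x hx y hy =>
    Finset.single_le_sum (fun z hz => hq0 x hx z hz) hy
  have hE0 : 0 ≤ E := by
    rw [hE]; unfold errProb
    refine Finset.sum_nonneg fun x hx => Finset.sum_nonneg fun y hy => ?_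
    by_cases h : x = y <;> simp [h, hq0 x hx y hy]
  have hrow : ∀ x ∈ Finset.Icc 1 n, ∑ y ∈ Finset.Icc 1 n, q x y
      = (∑ y ∈ Finset.Icc 1 n, if x = y then 0 else q x y) + q x x := by
    intro x hx
    have h1 : ∑ y ∈ Finset.Icc 1 n, (if x = y then q x y else 0) = q x x := by
      rw [Finset.sum_ite_eq]; simp [hx]
    calc ∑ y ∈ Finset.Icc 1 n, q x y
        = ∑ y ∈ Finset.Icc 1 n,
            ((if x = y then 0 else q x y) + (if x = y then q x y else 0)) := by
          refine Finset.sum_congr rfl fun y hy => ?_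
          by_cases h : x = y <;> simp [h]
      _ = _ := by rw [Finset.sum_add_distrib, h1]
  have hdiag : ∑ x ∈ Finset.Icc 1 n, q x x = 1 - E := by
    have h1 : ∑ x ∈ Finset.Icc 1 n, ∑ y ∈ Finset.Icc 1 n, q x y
        = E + ∑ x ∈ Finset.Icc 1 n, q x x := by
      rw [Finset.sum_congr rfl hrow, Finset.sum_add_distrib, hE]; rfl
    rw [hq1] at h1; linarith
  have hE1 : E ≤ 1 := by
    have h2 : 0 ≤ ∑ x ∈ Finset.Icc 1 n, q x x :=
      Finset.sum_nonneg fun x hx => hq0 x hx x hx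
    rw [hdiag] at h2; linarith
  have hn1 : (1 : ℝ) ≤ (n : ℝ) := by exact_mod_cast hn
  have hm0 : ∀ x y, 0 ≤ m x y := by
    intro x y
    simp only [hm]
    by_cases h : x = y
    · simp only [h, if_true]; linarith
    · simp only [h, if_false]
      exact div_nonneg hE0 (by linarith)
  -- n = 1 forces E = 0
  have hn1E : n = 1 → E = 0 := by
    intro h
    rw [hE]; unfold errProb; subst h; simp
  -- E = 0 kills off-diagonal entries
  have hoff0 : E = 0 → ∀ x ∈ Finset.Icc 1 n, ∀ y ∈ Finset.Icc 1 n, x ≠ y → q x y = 0 := by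
    intro h0 x hx y hy hxy
    have hE' : ∑ x ∈ Finset.Icc 1 n, ∑ y ∈ Finset.Icc 1 n,
        (if x = y then 0 else q x y) = 0 := h0
    have hz1 := (Finset.sum_eq_zero_iff_of_nonneg (fun a ha =>
      Finset.sum_nonneg fun b hb => by
        by_cases h : a = b <;> simp [h, hq0 a ha b hb])).mp hE' x hx
    have hz2 := (Finset.sum_eq_zero_iff_of_nonneg (fun b hb => by
      by_cases h : x = b <;> simp [h, hq0 x hx b hb])).mp hz1 y hy
    simpa [hxy] using hz2
  -- E = 1 kills diagonal entries
  have hdiag0 : E = 1 → ∀ x ∈ Finset.Icc 1 n, q x x = 0 := by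
    intro h1 x hx
    have hz : ∑ x ∈ Finset.Icc 1 n, q x x = 0 := by rw [hdiag, h1]; ring
    exact (Finset.sum_eq_zero_iff_of_nonneg (fun x hx => hq0 x hx x hx)).mp hz x hx
  -- rewrite condEnt
  have hcond : condEnt n q
      = ∑ x ∈ Finset.Icc 1 n, ∑ y ∈ Finset.Icc 1 n,
          q x y * Real.log (pXof n q x / q x y) := by
    unfold condEnt
    refine Finset.sum_congr rfl fun x hx => ?_
    by_cases hPx : pXof n q x = 0
    · have hq0' : ∀ y ∈ Finset.Icc 1 n, q x y = 0 := fun y hy =>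
        le_antisymm (hPx ▸ hqleP x hx y hy) (hq0 x hx y hy)
      have hz : ∑ y ∈ Finset.Icc 1 n, q x y * Real.log (pXof n q x / q x y) = 0 :=
        Finset.sum_eq_zero fun y hy => by rw [hq0' y hy]; simp
      rw [hz, hPx, zero_mul]
    · rw [mul_neg, Finset.mul_sum, ← Finset.sum_neg_distrib]
      refine Finset.sum_congr rfl fun y hy => ?_
      have hlg : Real.log (pXof n q x / q x y) = -Real.log (q x y / pXof n q x) := by
        rw [← Real.log_inv, inv_div]
      rw [hlg]
      generalize Real.log (q x y / pXof n q x) = L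
      field_simp
  -- pointwise Gibbs bound
  have key : ∀ x ∈ Finset.Icc 1 n, ∀ y ∈ Finset.Icc 1 n,
      q x y * Real.log (pXof n q x / q x y)
        ≤ q x y * Real.log ((m x y)⁻¹) + (pXof n q x * m x y - q x y) := by
    intro x hx y hy
    rcases eq_or_lt_of_le (hq0 x hx y hy) with ha | ha
    · rw [← ha]
      simpa using mul_nonneg (hP0 x hx) (hm0 x y)
    · have hPpos : 0 < pXof n q x := lt_of_lt_of_le ha (hqleP x hx y hy)
      have hmpos : 0 < m x y := by
        rcases (hm0 x y).lt_or_eq with h | h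
        · exact h
        · exfalso
          by_cases hxy : x = y
          · have h1E : 1 - E = 0 := by simpa [hm, hxy] using h.symm
            have h2 := hdiag0 (by linarith) x hx
            rw [hxy] at h2 ha
            linarith
          · have h1E : E / ((n : ℝ) - 1) = 0 := by simpa [hm, hxy] using h.symm
            rcases div_eq_zero_iff.mp h1E with h0 | h0
            · have := hoff0 h0 x hx y hy hxy
              linarith
            · have hne : n = 1 := by
                have : (n : ℝ) = 1 := by linarith
                exact_mod_cast this
              subst hne
              simp only [Finset.Icc_self, Finset.mem_singleton] at hx hy
              exact hxy (hx.trans hy.symm)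
      have hqne : q x y ≠ 0 := ne_of_gt ha
      have l1 : Real.log (pXof n q x / q x y)
          = Real.log (pXof n q x) - Real.log (q x y) :=
        Real.log_div (ne_of_gt hPpos) hqne
      have l2 : Real.log (pXof n q x * m x y / q x y)
          = Real.log (pXof n q x) + Real.log (m x y) - Real.log (q x y) := by
        rw [Real.log_div (by positivity) hqne,
          Real.log_mul (ne_of_gt hPpos) (ne_of_gt hmpos)]
      have l3 : Real.log ((m x y)⁻¹) = -Real.log (m x y) := Real.log_inv _
      have l4 : Real.log (pXof n q x * m x y / q x y)
          ≤ pXof n q x * m x y / q x y - 1 :=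
        Real.log_le_sub_one_of_pos (by positivity)
      have l6 : q x y * (pXof n q x * m x y / q x y - 1)
          = pXof n q x * m x y - q x y := by field_simp
      have l7 : q x y * Real.log (pXof n q x * m x y / q x y)
          ≤ pXof n q x * m x y - q x y :=
        calc q x y * Real.log (pXof n q x * m x y / q x y)
            ≤ q x y * (pXof n q x * m x y / q x y - 1) :=
              mul_le_mul_of_nonneg_left l4 ha.le
          _ = _ := l6
      have l8 : q x y * Real.log (pXof n q x / q x y)
          = q x y * Real.log (pXof n q x * m x y / q x y)
            + q x y * Real.log ((m x y)⁻¹) := by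
        rw [l1, l2, l3]; ring
      linarith
  -- each row of m sums to 1
  have hmrow : ∀ x ∈ Finset.Icc 1 n, ∑ y ∈ Finset.Icc 1 n, m x y = 1 := by
    intro x hx
    have hsplit : ∑ y ∈ Finset.Icc 1 n, m x y
        = ∑ y ∈ Finset.Icc 1 n,
            (E / ((n : ℝ) - 1)
              + (if x = y then (1 - E) - E / ((n : ℝ) - 1) else 0)) := by
      refine Finset.sum_congr rfl fun y hy => ?_
      simp only [hm]
      by_cases h : x = y
      · simp [h]
      · simp [h]
    rw [hsplit, Finset.sum_add_distrib, Finset.sum_const, Finset.sum_ite_eq, if_pos hx,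
      Nat.card_Icc]
    simp only [Nat.add_sub_cancel, nsmul_eq_mul]
    by_cases hne : (n : ℝ) - 1 = 0
    · have hE0' : E = 0 := hn1E (by exact_mod_cast (by linarith : (n : ℝ) = 1))
      rw [hE0']
      simp
    · field_simp
      ring
  -- total mass of pX ⊗ m is 1
  have hS : ∑ x ∈ Finset.Icc 1 n, ∑ y ∈ Finset.Icc 1 n, pXof n q x * m x y = 1 := by
    have h1 : ∀ x ∈ Finset.Icc 1 n,
        ∑ y ∈ Finset.Icc 1 n, pXof n q x * m x y = pXof n q x := by
      intro x hx
      rw [← Finset.mul_sum, hmrow x hx, mul_one]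
    rw [Finset.sum_congr rfl h1]
    unfold pXof
    exact hq1
  -- the cross-entropy term equals the Fano bound
  have hT : ∑ x ∈ Finset.Icc 1 n, ∑ y ∈ Finset.Icc 1 n, q x y * Real.log ((m x y)⁻¹)
      = -(E * Real.log E) - (1 - E) * Real.log (1 - E) + E * Real.log ((n : ℝ) - 1) := by
    have hsplit : ∀ x ∈ Finset.Icc 1 n, ∀ y ∈ Finset.Icc 1 n,
        q x y * Real.log ((m x y)⁻¹)
          = (if x = y then 0 else q x y) * Real.log ((E / ((n : ℝ) - 1))⁻¹)
            + (if x = y then q x y else 0) * (-Real.log (1 - E)) := by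
      intro x hx y hy
      simp only [hm]
      by_cases h : x = y
      · simp [h, Real.log_inv]
      · simp [h]
    have hA : ∑ x ∈ Finset.Icc 1 n, ∑ y ∈ Finset.Icc 1 n,
        (if x = y then 0 else q x y) * Real.log ((E / ((n : ℝ) - 1))⁻¹)
          = E * Real.log ((E / ((n : ℝ) - 1))⁻¹) := by
      rw [Finset.sum_congr rfl fun x (hx : x ∈ Finset.Icc 1 n) =>
        (Finset.sum_mul (Finset.Icc 1 n) (fun y => if x = y then 0 else q x y)
          (Real.log ((E / ((n : ℝ) - 1))⁻¹))).symm,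
        ← Finset.sum_mul, hE]
      rfl
    have hB : ∑ x ∈ Finset.Icc 1 n, ∑ y ∈ Finset.Icc 1 n,
        (if x = y then q x y else 0) * (-Real.log (1 - E))
          = (1 - E) * (-Real.log (1 - E)) := by
      have hinner : ∀ x ∈ Finset.Icc 1 n, ∑ y ∈ Finset.Icc 1 n,
          (if x = y then q x y else 0) * (-Real.log (1 - E))
            = q x x * (-Real.log (1 - E)) := by
        intro x hx
        have hh : ∀ y ∈ Finset.Icc 1 n,
            (if x = y then q x y else 0) * (-Real.log (1 - E))
              = (if x = y then q x y * (-Real.log (1 - E)) else 0) := by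
          intro y hy; by_cases h : x = y <;> simp [h]
        rw [Finset.sum_congr rfl hh, Finset.sum_ite_eq, if_pos hx]
      rw [Finset.sum_congr rfl hinner, ← Finset.sum_mul, hdiag]
    have h1 : ∑ x ∈ Finset.Icc 1 n, ∑ y ∈ Finset.Icc 1 n, q x y * Real.log ((m x y)⁻¹)
        = E * Real.log ((E / ((n : ℝ) - 1))⁻¹) + (1 - E) * (-Real.log (1 - E)) := by
      rw [Finset.sum_congr rfl fun x hx => Finset.sum_congr rfl fun y hy => hsplit x hx y hy]
      rw [Finset.sum_congr rfl fun x (hx : x ∈ Finset.Icc 1 n) => Finset.sum_add_distrib,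
        Finset.sum_add_distrib, hA, hB]
    rw [h1]
    rcases eq_or_ne E 0 with h0 | h0
    · rw [h0]; simp
    · have hpos : (0 : ℝ) < (n : ℝ) - 1 := by
        rcases Nat.lt_or_ge n 2 with h | h
        · interval_cases n
          · exact absurd (hn1E rfl) h0
        · have : (2 : ℝ) ≤ (n : ℝ) := by exact_mod_cast h
          linarith
      rw [Real.log_inv, Real.log_div h0 (ne_of_gt hpos)]
      ring
  -- assemble
  calc condEnt n q
      = ∑ x ∈ Finset.Icc 1 n, ∑ y ∈ Finset.Icc 1 n,
          q x y * Real.log (pXof n q x / q x y) := hcond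
    _ ≤ ∑ x ∈ Finset.Icc 1 n, ∑ y ∈ Finset.Icc 1 n,
          (q x y * Real.log ((m x y)⁻¹) + (pXof n q x * m x y - q x y)) :=
        Finset.sum_le_sum fun x hx => Finset.sum_le_sum fun y hy => key x hx y hy
    _ = (∑ x ∈ Finset.Icc 1 n, ∑ y ∈ Finset.Icc 1 n, q x y * Real.log ((m x y)⁻¹))
          + ((∑ x ∈ Finset.Icc 1 n, ∑ y ∈ Finset.Icc 1 n, pXof n q x * m x y)
            - ∑ x ∈ Finset.Icc 1 n, ∑ y ∈ Finset.Icc 1 n, q x y) := by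
        simp only [Finset.sum_add_distrib, Finset.sum_sub_distrib]
    _ ≤ -(E * Real.log E) - (1 - E) * Real.log (1 - E) + E * Real.log ((n : ℝ) - 1) := by
        rw [hT, hS, hq1]
        simp
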